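/- Let P be an additive submonoid of the nonnegative cone of an ordered field K generated by an increasing sequence (a_n). Then P is atomic and the set of atoms of P equals { a_n : a_n ∉ ⟨a_1, …, a_{n-1}⟩ }. -/

import Mathlib

/-- `a` is an atom of the additive submonoid `P`. -/
def IsAtomOf {K : Type*} [AddCommMonoid K] (P : AddSubmonoid K) (a : K) : Prop :=
  a ∈ P ∧ a ≠ 0 ∧ ∀ x ∈ P, ∀ y ∈ P, a = x + y → x = 0 ∨ y = 0

/-- `P` is atomic: every element is a finite sum of atoms. -/
def IsAtomicMonoid {K : Type*} [AddCommMonoid K] (P : AddSubmonoid K) : Prop :=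
  ∀ x ∈ P, ∃ s : Multiset K, (∀ a ∈ s, IsAtomOf P a) ∧ s.sum = x

/-- The set of factorizations of `x` into atoms of `P`. -/
def Factorizations {K : Type*} [AddCommMonoid K] (P : AddSubmonoid K) (x : K) :
    Set (Multiset K) :=
  {s | (∀ a ∈ s, IsAtomOf P a) ∧ s.sum = x}

/-- `P` is an FF-monoid. -/
def IsFFMonoid {K : Type*} [AddCommMonoid K] (P : AddSubmonoid K) : Prop :=
  IsAtomicMonoid P ∧ ∀ x ∈ P, (Factorizations P x).Finite

/-- `P` is a BF-monoid. -/
def IsBFMonoid {K : Type*} [AddCommMonoid K] (P : AddSubmonoid K) : Prop :=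
  IsAtomicMonoid P ∧ ∀ x ∈ P, {n : ℕ | ∃ s ∈ Factorizations P x, Multiset.card s = n}.Finite

/-- Auxiliary: combine atom-decompositions of elements of a list. -/
lemma sum_atoms_of_list {K : Type*} [AddCommMonoid K] (P : AddSubmonoid K) :
    ∀ l : List K, (∀ b ∈ l, ∃ t : Multiset K, (∀ c ∈ t, IsAtomOf P c) ∧ t.sum = b) →
    ∃ t : Multiset K, (∀ c ∈ t, IsAtomOf P c) ∧ t.sum = l.sum
  | [], _ => ⟨0, by simp, by simp⟩
  | b :: l, h => by
      obtain ⟨t1, ht1, hs1⟩ := h b (List.mem_cons_self)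
      obtain ⟨t2, ht2, hs2⟩ := sum_atoms_of_list P l (fun c hc => h c (List.mem_cons_of_mem _ hc))
      refine ⟨t1 + t2, fun c hc => ?_, by simp [hs1, hs2]⟩
      rcases Multiset.mem_add.1 hc with h' | h'
      exacts [ht1 c h', ht2 c h']

/-- Auxiliary: in a list of positive elements of length ≥ 2, each member is
strictly less than the sum. -/
lemma mem_lt_sum {K : Type*} [Field K] [LinearOrder K] [IsStrictOrderedRing K] {l : List K}
    (hl : ∀ y ∈ l, 0 < y) (h2 : 2 ≤ l.length) {b : K} (hb : b ∈ l) : b < l.sum := by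
  have hperm := List.perm_cons_erase hb
  have hsum : l.sum = b + (l.erase b).sum := by
    rw [hperm.sum_eq]; simp
  have hne : l.erase b ≠ [] := by
    intro h
    have := l.length_erase_of_mem hb
    rw [h] at this
    simp at this
    omega
  have hpos : 0 < (l.erase b).sum :=
    List.sum_pos _ (fun y hy => hl y ((l.erase_sublist (a := b)).subset hy)) hne
  linarith

theorem increasing_positive_monoid_atomic {K : Type*} [Field K] [LinearOrder K] [IsStrictOrderedRing K]
    (a : ℕ → K) (ha : Monotone a) (hpos : ∀ n, 0 < a n)
    (P : AddSubmonoid K) (hgen : AddSubmonoid.closure (Set.range a) = P) :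
    IsAtomicMonoid P ∧
      {x | IsAtomOf P x} =
        {x | ∃ n, x = a n ∧ a n ∉ AddSubmonoid.closure (a '' Set.Iio n)} := by
  subst hgen
  set P := AddSubmonoid.closure (Set.range a) with hP
  -- every element of P is a sum of a list of generators
  have hrep : ∀ x ∈ P, ∃ l : List K, (∀ y ∈ l, y ∈ Set.range a) ∧ l.sum = x :=
    fun x hx => AddSubmonoid.exists_list_of_mem_closure hx
  have hgenpos : ∀ y ∈ Set.range a, 0 < y := by rintro y ⟨n, rfl⟩; exact hpos n
  have hPpos : ∀ x ∈ P, x ≠ 0 → 0 < x := by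
    intro x hx hne
    obtain ⟨l, hl, rfl⟩ := hrep x hx
    have hlne : l ≠ [] := by rintro rfl; simp at hne
    exact List.sum_pos _ (fun y hy => hgenpos y (hl y hy)) hlne
  -- a nonzero element of P has a nonempty generator list
  have hrep' : ∀ x ∈ P, x ≠ 0 → ∃ l : List K, (∀ y ∈ l, y ∈ Set.range a) ∧ l.sum = x ∧ l ≠ [] := by
    intro x hx hne
    obtain ⟨l, hl, rfl⟩ := hrep x hx
    refine ⟨l, hl, rfl, ?_⟩
    rintro rfl; simp at hne
  -- key: each generator is a sum of atoms
  have key : ∀ i : ℕ, ∃ t : Multiset K, (∀ c ∈ t, IsAtomOf P c) ∧ t.sum = a i := by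
    intro i
    induction i using Nat.strong_induction_on with
    | _ i IH =>
      by_cases hat : IsAtomOf P (a i)
      · exact ⟨{a i}, by simpa using hat, by simp⟩
      · have hmem : a i ∈ P := AddSubmonoid.subset_closure ⟨i, rfl⟩
        have hne : a i ≠ 0 := (hpos i).ne'
        rw [IsAtomOf] at hat
        push_neg at hat
        obtain ⟨x, hxP, y, hyP, hxy, hx0, hy0⟩ := hat hmem hne
        obtain ⟨lx, hlx, hlxs, hlxne⟩ := hrep' x hxP hx0
        obtain ⟨ly, hly, hlys, hlyne⟩ := hrep' y hyP hy0
        set l := lx ++ ly with hl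
        have hlsum : l.sum = a i := by simp [hl, hlxs, hlys, hxy]
        have hlmem : ∀ y ∈ l, y ∈ Set.range a := by
          intro z hz
          rcases List.mem_append.1 hz with h' | h'
          exacts [hlx z h', hly z h']
        have hlen : 2 ≤ l.length := by
          have h1 : 1 ≤ lx.length := List.length_pos_iff.2 hlxne
          have h2 : 1 ≤ ly.length := List.length_pos_iff.2 hlyne
          simp only [hl, List.length_append]; omega
        have hlt : ∀ b ∈ l, b < a i := by
          intro b hb
          have := mem_lt_sum (fun z hz => hgenpos z (hlmem z hz)) hlen hb
          rwa [hlsum] at this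
        obtain ⟨t, ht, hts⟩ := sum_atoms_of_list P l (by
          intro b hb
          obtain ⟨j, rfl⟩ := hlmem b hb
          have hji : j < i := by
            by_contra h
            exact absurd (ha (le_of_not_gt h)) (not_le.2 (hlt _ hb))
          exact IH j hji)
        exact ⟨t, ht, by rw [hts, hlsum]⟩
  have atomic : IsAtomicMonoid P := by
    intro x hx
    obtain ⟨l, hl, rfl⟩ := hrep x hx
    exact sum_atoms_of_list P l (by
      intro b hb
      obtain ⟨j, rfl⟩ := hl b hb
      exact key j)
  refine ⟨atomic, ?_⟩
  ext x
  simp only [Set.mem_setOf_eq]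
  constructor
  · intro hx
    obtain ⟨hxP, hx0, hsplit⟩ := hx
    -- x is a generator
    obtain ⟨l, hl, hls, hlne⟩ := hrep' x hxP hx0
    have hx_gen : x ∈ Set.range a := by
      match l, hlne with
      | [b], _ =>
        have : b = x := by simpa using hls
        exact this ▸ hl b (List.mem_cons_self)
      | b :: c :: rest, _ =>
        exfalso
        have hbP : b ∈ P := AddSubmonoid.subset_closure (hl b (by simp))
        have hrestP : (c :: rest).sum ∈ P :=
          P.list_sum_mem (fun z hz => AddSubmonoid.subset_closure (hl z (by simp [hz])))
        have hx_eq : x = b + (c :: rest).sum := by rw [← hls]; simp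
        rcases hsplit b hbP _ hrestP hx_eq with h' | h'
        · exact (hgenpos b (hl b (by simp))).ne' h'
        · have : 0 < (c :: rest).sum :=
            List.sum_pos _ (fun z hz => hgenpos z (hl z (by simp [hz]))) (by simp)
          exact this.ne' h'
    obtain ⟨m, hm⟩ := hx_gen
    have hex : ∃ n, a n = x := ⟨m, hm⟩
    set n := Nat.find hex with hn
    have hnx : a n = x := Nat.find_spec hex
    refine ⟨n, hnx.symm, ?_⟩
    intro hmem
    obtain ⟨l', hl', hl's⟩ := AddSubmonoid.exists_list_of_mem_closure hmem
    have hl'pos : ∀ z ∈ l', 0 < z := by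
      intro z hz
      obtain ⟨k, _, rfl⟩ := hl' z hz
      exact hpos k
    match l', hl', hl's, hl'pos with
    | [], _, hl's, _ => exact (hpos n).ne' hl's.symm
    | [c], hl', hl's, _ =>
      obtain ⟨k, hk, rfl⟩ := hl' c (by simp)
      have hkn : k < n := hk
      have : a k = x := by rw [← hnx, ← hl's]; simp
      exact Nat.find_min hex hkn this
    | c :: d :: rest, hl', hl's, hl'pos =>
      have hcP : c ∈ P := AddSubmonoid.subset_closure (Set.image_subset_range a _ (hl' c (by simp)))
      have hrestP : (d :: rest).sum ∈ P :=
        P.list_sum_mem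
          (fun z hz => AddSubmonoid.subset_closure (Set.image_subset_range a _ (hl' z (by simp [hz]))))
      have hx_eq : x = c + (d :: rest).sum := by rw [← hnx, ← hl's]; simp
      rcases hsplit c hcP _ hrestP hx_eq with h' | h'
      · exact (hl'pos c (by simp)).ne' h'
      · have : 0 < (d :: rest).sum :=
          List.sum_pos _ (fun z hz => hl'pos z (by simp [hz])) (by simp)
        exact this.ne' h'
  · rintro ⟨n, rfl, hnot⟩
    refine ⟨AddSubmonoid.subset_closure ⟨n, rfl⟩, (hpos n).ne', ?_⟩
    intro y hyP z hzP heq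
    by_contra hcon
    push_neg at hcon
    obtain ⟨hy0, hz0⟩ := hcon
    obtain ⟨ly, hly, hlys, hlyne⟩ := hrep' y hyP hy0
    obtain ⟨lz, hlz, hlzs, hlzne⟩ := hrep' z hzP hz0
    set l := ly ++ lz with hl
    have hlsum : l.sum = a n := by simp [hl, hlys, hlzs, heq]
    have hlmem : ∀ w ∈ l, w ∈ Set.range a := by
      intro w hw
      rcases List.mem_append.1 hw with h' | h'
      exacts [hly w h', hlz w h']
    have hlen : 2 ≤ l.length := by
      have h1 : 1 ≤ ly.length := List.length_pos_iff.2 hlyne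
      have h2 : 1 ≤ lz.length := List.length_pos_iff.2 hlzne
      simp only [hl, List.length_append]; omega
    apply hnot
    rw [← hlsum]
    refine (AddSubmonoid.closure (a '' Set.Iio n)).list_sum_mem (fun w hw => AddSubmonoid.subset_closure ?_)
    obtain ⟨j, rfl⟩ := hlmem w hw
    have hjn : j < n := by
      by_contra h
      have hlt := mem_lt_sum (fun z hz => hgenpos z (hlmem z hz)) hlen hw
      rw [hlsum] at hlt
      exact absurd (ha (le_of_not_gt h)) (not_le.2 hlt)
    exact ⟨j, hjn, rfl⟩
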